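/- Rounding loss bounded by singleton profit: let w > 0, c ≥ 0, r > 0, x* ∈ (0,1), W ≥ 0, and suppose c ≤ r·e^{−w}·w. Then r·e^{−W}·(1 − e^{−w·x*}) − c·x* ≤ r·(1 − e^{−w}) − c. -/
import Mathlib

/-- Rounding loss bounded by singleton profit: let `w > 0`, `c ≥ 0`, `r > 0`,
`x* ∈ (0,1)`, `W ≥ 0`, and suppose `c ≤ r e^{-w} w`. Then
`r e^{-W} (1 - e^{-w x*}) - c x* ≤ r (1 - e^{-w}) - c`. -/
theorem stmt_12 (w c r xs W : ℝ) (hw : 0 < w) (hc : 0 ≤ c) (hr : 0 < r)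
    (hxs0 : 0 < xs) (hxs1 : xs < 1) (hW : 0 ≤ W)
    (hkey : c ≤ r * Real.exp (-w) * w) :
    r * Real.exp (-W) * (1 - Real.exp (-(w * xs))) - c * xs
      ≤ r * (1 - Real.exp (-w)) - c := by
  have h1 : Real.exp (-W) ≤ 1 := Real.exp_le_one_iff.mpr (by linarith)
  have hA : Real.exp (-(w * xs)) ≤ 1 := Real.exp_le_one_iff.mpr (by nlinarith)
  have he : Real.exp (-(w * xs)) = Real.exp (-w) * Real.exp (w * (1 - xs)) := by
    rw [← Real.exp_add]; ring_nf
  have hexp := Real.add_one_le_exp (w * (1 - xs))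
  have hpos := (Real.exp_pos (-w)).le
  -- c*(1-xs) ≤ r*(exp(-(w*xs)) - exp(-w))
  have hcw : c * (1 - xs) ≤ r * (Real.exp (-(w * xs)) - Real.exp (-w)) := by
    rw [he]
    have : r * Real.exp (-w) * w * (1 - xs) ≤ r * (Real.exp (-w) * Real.exp (w * (1 - xs)) - Real.exp (-w)) := by
      nlinarith
    nlinarith
  have hA0 : (0:ℝ) ≤ 1 - Real.exp (-(w * xs)) := by linarith
  have hstep : r * Real.exp (-W) * (1 - Real.exp (-(w * xs))) ≤ r * (1 - Real.exp (-(w * xs))) := by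
    have := mul_le_mul_of_nonneg_right h1 hA0
    nlinarith
  nlinarith
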